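/- Let 0 < η < 1 and let (X,Σ,μ) be a probability space such that μ(A) ≤ η for every atom A of (X,Σ,μ). Let B ∈ Σ with μ(B) > η, and let η ≤ c < μ(B). Then there exists C ∈ Σ with C ⊆ B and c ≤ μ(C) < c + η. -/

import Mathlib

open MeasureTheory

/-- **Approximate Sierpiński theorem for spaces with small atoms.**
If every atom of the probability space `(X, μ)` has measure at most `η`,
`B` is measurable with `μ(B) > η` and `η ≤ c < μ(B)`, then there is a measurable
`C ⊆ B` with `c ≤ μ(C) < c + η`. -/
theorem stmt2 {X : Type*} [MeasurableSpace X] (μ : Measure X) [IsProbabilityMeasure μ]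
    (η : ℝ) (hη0 : 0 < η) (hη1 : η < 1)
    (hatom : ∀ A : Set X, MeasurableSet A → 0 < μ A →
      (∀ B : Set X, B ⊆ A → MeasurableSet B → μ B = 0 ∨ μ B = μ A) →
      (μ A).toReal ≤ η)
    (B : Set X) (hB : MeasurableSet B) (hBη : η < (μ B).toReal)
    (c : ℝ) (hc1 : η ≤ c) (hc2 : c < (μ B).toReal) :
    ∃ C : Set X, MeasurableSet C ∧ C ⊆ B ∧ c ≤ (μ C).toReal ∧ (μ C).toReal < c + η := by
  classical
  -- Lemma A: every set of positive measure contains a subset of small positive measure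
  have lemA : ∀ D : Set X, MeasurableSet D → 0 < μ D →
      ∃ E, E ⊆ D ∧ MeasurableSet E ∧ 0 < μ E ∧ μ E ≤ ENNReal.ofReal η := by
    intro D hD hDpos
    set S : Set ENNReal := {x | ∃ E, E ⊆ D ∧ MeasurableSet E ∧ 0 < μ E ∧ μ E = x} with hS
    have hDS : μ D ∈ S := ⟨D, subset_rfl, hD, hDpos, rfl⟩
    set m := sInf S with hm
    have hmle : m ≤ μ D := sInf_le hDS
    have hmtop : m ≠ ⊤ := (lt_of_le_of_lt hmle (measure_lt_top μ D)).ne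
    by_cases hcase : m < ENNReal.ofReal η
    · obtain ⟨x, hxS, hx⟩ := (sInf_lt_iff).1 hcase
      obtain ⟨E, hEsub, hEmeas, hEpos, hEeq⟩ := hxS
      exact ⟨E, hEsub, hEmeas, hEpos, hEeq ▸ hx.le⟩
    · push_neg at hcase
      have hη0' : (0 : ENNReal) < ENNReal.ofReal η := by simpa using hη0
      have hm0 : 0 < m := lt_of_lt_of_le hη0' hcase
      have hlt : m < m + m := ENNReal.lt_add_right hmtop hm0.ne'
      obtain ⟨x, hxS, hx⟩ := (sInf_lt_iff).1 hlt
      obtain ⟨E, hEsub, hEmeas, hEpos, rfl⟩ := hxS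
      have hEatom : ∀ F : Set X, F ⊆ E → MeasurableSet F → μ F = 0 ∨ μ F = μ E := by
        intro F hFE hF
        rcases eq_or_ne (μ F) 0 with h0 | h0
        · exact Or.inl h0
        · right
          have hFm : m ≤ μ F := sInf_le ⟨F, hFE.trans hEsub, hF, h0.bot_lt, rfl⟩
          have hsum : μ F + μ (E \ F) = μ E := by
            have h := measure_inter_add_diff (μ := μ) E hF
            rwa [Set.inter_eq_self_of_subset_right hFE] at h
          rcases eq_or_ne (μ (E \ F)) 0 with hd0 | hd0
          · rw [hd0, add_zero] at hsum; exact hsum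
          · exfalso
            have hdm : m ≤ μ (E \ F) :=
              sInf_le ⟨E \ F, (Set.diff_subset).trans hEsub, hEmeas.diff hF, hd0.bot_lt, rfl⟩
            have h2 : m + m ≤ μ E := hsum ▸ add_le_add hFm hdm
            exact absurd (lt_of_le_of_lt h2 hx) (lt_irrefl _)
      have hto := hatom E hEmeas hEpos hEatom
      exact ⟨E, hEsub, hEmeas, hEpos,
        (ENNReal.le_ofReal_iff_toReal_le (measure_ne_top μ E) hη0.le).2 hto⟩
  -- a near-maximal small piece can be chosen inside any remainder
  have hstep : ∀ C : Set X, ∃ E : Set X, E ⊆ B \ C ∧ MeasurableSet E ∧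
      μ E ≤ ENNReal.ofReal η ∧
      ∀ F : Set X, F ⊆ B \ C → MeasurableSet F → μ F ≤ ENNReal.ofReal η → μ F ≤ 2 * μ E := by
    intro C
    set T : Set ENNReal :=
      {x | ∃ E, E ⊆ B \ C ∧ MeasurableSet E ∧ μ E ≤ ENNReal.ofReal η ∧ μ E = x} with hT
    set σ := sSup T with hσ
    have hσle : σ ≤ ENNReal.ofReal η := sSup_le (by rintro x ⟨E, -, -, hE, rfl⟩; exact hE)
    have hσtop : σ ≠ ⊤ := (lt_of_le_of_lt hσle ENNReal.ofReal_lt_top).ne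
    rcases eq_or_ne σ 0 with hσ0 | hσ0
    · refine ⟨∅, by simp, MeasurableSet.empty, by simp, ?_⟩
      intro F hF hFm hFη
      have hax : μ F ≤ σ := le_sSup ⟨F, hF, hFm, hFη, rfl⟩
      rw [hσ0] at hax
      simp [le_antisymm hax bot_le]
    · have hhalf : σ / 2 < σ := ENNReal.half_lt_self hσ0 hσtop
      obtain ⟨x, hxT, hx⟩ := (lt_sSup_iff).1 hhalf
      obtain ⟨E, hEsub, hEmeas, hEη, rfl⟩ := hxT
      refine ⟨E, hEsub, hEmeas, hEη, ?_⟩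
      intro F hF hFm hFη
      calc μ F ≤ σ := le_sSup ⟨F, hF, hFm, hFη, rfl⟩
        _ = 2 * (σ / 2) := by rw [ENNReal.mul_div_cancel two_ne_zero ENNReal.ofNat_ne_top]
        _ ≤ 2 * μ E := mul_le_mul_right hx.le 2
  choose step hsub hmeas hle hmax using hstep
  -- the greedy sequence
  set f : ℕ → Set X := fun n => Nat.rec ∅ (fun _ C => C ∪ step C) n with hf
  have hf0 : f 0 = ∅ := rfl
  have hfs : ∀ n, f (n + 1) = f n ∪ step (f n) := fun n => rfl
  have hfmeas : ∀ n, MeasurableSet (f n) := by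
    intro n; induction n with
    | zero => exact MeasurableSet.empty
    | succ n ih => rw [hfs]; exact ih.union (hmeas _)
  have hfB : ∀ n, f n ⊆ B := by
    intro n; induction n with
    | zero => simp [hf0]
    | succ n ih => rw [hfs]; exact Set.union_subset ih ((hsub _).trans Set.diff_subset)
  have hfmono : Monotone f :=
    monotone_nat_of_le_succ fun n => by rw [hfs]; exact Set.subset_union_left
  have hfadd : ∀ n, μ (f (n + 1)) = μ (f n) + μ (step (f n)) := by
    intro n
    rw [hfs]
    exact measure_union (Disjoint.mono_right (hsub (f n)) Set.disjoint_sdiff_right) (hmeas (f n))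
  -- there is some n with μ (f n) ≥ c
  have hreach : ∃ n, ENNReal.ofReal c ≤ μ (f n) := by
    by_contra h
    push_neg at h
    set C := ⋃ n, f n with hC
    have hCmeas : MeasurableSet C := MeasurableSet.iUnion hfmeas
    have hCB : C ⊆ B := Set.iUnion_subset hfB
    have hCle : μ C ≤ ENNReal.ofReal c := by
      rw [hC, hfmono.directed_le.measure_iUnion]
      exact iSup_le fun n => (h n).le
    have hcpos : (0 : ℝ) < c := lt_of_lt_of_le hη0 hc1
    have hCltB : μ C < μ B := by
      refine lt_of_le_of_lt hCle ?_
      rw [← ENNReal.ofReal_toReal (measure_ne_top μ B)]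
      exact (ENNReal.ofReal_lt_ofReal_iff (hcpos.trans hc2)).2 hc2
    have hdiff : 0 < μ (B \ C) := by
      have h' := measure_inter_add_diff (μ := μ) B hCmeas
      rw [Set.inter_eq_self_of_subset_right hCB] at h'
      by_contra h0
      push_neg at h0
      have h0' : μ (B \ C) = 0 := le_antisymm h0 bot_le
      rw [h0', add_zero] at h'
      exact absurd h'.ge (not_le.2 hCltB)
    obtain ⟨E, hEsub, hEmeas, hEpos, hEη⟩ := lemA (B \ C) (hB.diff hCmeas) hdiff
    have hEn : ∀ n, μ E ≤ 2 * μ (step (f n)) := by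
      intro n
      exact hmax (f n) E
        (hEsub.trans (Set.diff_subset_diff_right (Set.subset_iUnion f n))) hEmeas hEη
    have hE2 : μ E / 2 ≠ 0 := by
      simp only [ne_eq, ENNReal.div_eq_zero_iff]
      push_neg
      exact ⟨hEpos.ne', ENNReal.ofNat_ne_top⟩
    have hE2top : μ E / 2 ≠ ⊤ :=
      (ENNReal.div_lt_top (lt_of_le_of_lt hEη ENNReal.ofReal_lt_top).ne two_ne_zero).ne
    have hgrow : ∀ n : ℕ, (n : ENNReal) * (μ E / 2) ≤ μ (f n) := by
      intro n; induction n with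
      | zero => simp
      | succ n ih =>
        rw [hfadd]
        push_cast
        rw [add_mul, one_mul]
        refine add_le_add ih ?_
        rw [ENNReal.div_le_iff_le_mul (Or.inl two_ne_zero) (Or.inl ENNReal.ofNat_ne_top)]
        rw [mul_comm]
        exact hEn n
    obtain ⟨n, hn⟩ := ENNReal.exists_nat_gt
      (r := ENNReal.ofReal c / (μ E / 2)) (ENNReal.div_lt_top ENNReal.ofReal_ne_top hE2).ne
    have hbig : ENNReal.ofReal c < (n : ENNReal) * (μ E / 2) := by
      calc ENNReal.ofReal c = ENNReal.ofReal c / (μ E / 2) * (μ E / 2) :=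
            (ENNReal.div_mul_cancel hE2 hE2top).symm
        _ < (n : ENNReal) * (μ E / 2) :=
            ENNReal.mul_lt_mul_left hE2 hE2top hn
    exact absurd ((hbig.trans_le (hgrow n)).le) (not_le.2 (h n))
  -- take the first such n
  have hn : ENNReal.ofReal c ≤ μ (f (Nat.find hreach)) := Nat.find_spec hreach
  have hnpos : Nat.find hreach ≠ 0 := by
    intro h0
    rw [h0, hf0, measure_empty] at hn
    have hcpos : (0 : ℝ) < c := lt_of_lt_of_le hη0 hc1
    simp only [nonpos_iff_eq_zero, ENNReal.ofReal_eq_zero] at hn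
    linarith
  obtain ⟨k, hk⟩ := Nat.exists_eq_succ_of_ne_zero hnpos
  have hprev : μ (f k) < ENNReal.ofReal c := by
    have hmin := Nat.find_min hreach (m := k) (by omega)
    exact not_le.1 hmin
  rw [hk] at hn
  have hupper : μ (f (k + 1)) < ENNReal.ofReal (c + η) := by
    rw [hfadd]
    calc μ (f k) + μ (step (f k)) < ENNReal.ofReal c + ENNReal.ofReal η :=
          ENNReal.add_lt_add_of_lt_of_le (measure_ne_top μ _) hprev (hle _)
      _ = ENNReal.ofReal (c + η) := (ENNReal.ofReal_add (by linarith) hη0.le).symm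
  refine ⟨f (k + 1), hfmeas (k + 1), hfB (k + 1), ?_, ?_⟩
  · exact (ENNReal.ofReal_le_iff_le_toReal (measure_ne_top μ _)).1 hn
  · exact (ENNReal.lt_ofReal_iff_toReal_lt (measure_ne_top μ _)).1 hupper
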